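/- Let n ≥ 1, let w_1,…,w_n ∈ ℝ^d have strictly positive coordinates, and define g(x) := min_{1≤k≤n} log(w_kᵀ x) for x ∈ Δ. Suppose α ∈ (0,1) and ψ, φ : Δ → ℝ are exponentially concave functions with g(x) = α ψ(x) + (1−α) φ(x) for every x ∈ Δ. Then there exist constants c₁, c₂ ∈ ℝ with α c₁ + (1−α) c₂ = 0 such that ψ(x) = g(x) + c₁ and φ(x) = g(x) + c₂ for every x ∈ Δ. In particular, every minimum of finitely many log-affine functions is an extreme point of the set of exponentially concave functions modulo additive constants. -/

import Mathlib

open scoped BigOperators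

/-- The open unit simplex in `ℝ^d`. -/
def openSimplex (d : ℕ) : Set (Fin d → ℝ) :=
  {x | (∀ i, 0 < x i) ∧ ∑ i, x i = 1}

/-- A function `φ` on the open simplex is exponentially concave if `e^φ` is concave there. -/
def ExpConcave {d : ℕ} (φ : (Fin d → ℝ) → ℝ) : Prop :=
  ConcaveOn ℝ (openSimplex d) (fun x => Real.exp (φ x))

/-- `x ↦ min_{1 ≤ k ≤ n} log (w_kᵀ x)`, the minimum of finitely many log-affine functions. -/
noncomputable def minLogAffine {d n : ℕ} (w : Fin (n + 1) → Fin d → ℝ)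
    (x : Fin d → ℝ) : ℝ :=
  Finset.univ.inf' Finset.univ_nonempty (fun k => Real.log (∑ i, w k i * x i))



/-- strict two-point weighted AM-GM -/
lemma young_strict {a b α : ℝ} (ha : 0 < a) (hb : 0 < b) (hα : 0 < α) (hα1 : α < 1)
    (hab : a ≠ b) : a ^ α * b ^ (1 - α) < α * a + (1 - α) * b := by
  have h1α : (0:ℝ) < 1 - α := by linarith
  have hsum : α + (1 - α) = 1 := by ring
  have hcc := strictConcaveOn_log_Ioi.2 (Set.mem_Ioi.2 ha) (Set.mem_Ioi.2 hb) hab hα h1α hsum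
  simp only [smul_eq_mul] at hcc
  have hpos : 0 < α * a + (1 - α) * b := by positivity
  have := Real.exp_lt_exp.2 hcc
  rwa [Real.exp_add, Real.exp_log hpos, mul_comm α, mul_comm (1-α), Real.exp_mul,
    Real.exp_mul, Real.exp_log ha, Real.exp_log hb] at this

lemma rpow_decomp {A C S T α : ℝ} (hA : 0 < A) (hC : 0 < C) (hS : 0 < S) (hT : 0 < T) :
    A ^ α * C ^ (1 - α) = ((A/S) ^ α * (C/T) ^ (1-α)) * (S ^ α * T ^ (1-α)) := by
  have h1 : (A/S) ^ α * S ^ α = A ^ α := by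
    rw [← Real.mul_rpow (by positivity) hS.le, div_mul_cancel₀ _ hS.ne']
  have h2 : (C/T) ^ (1-α) * T ^ (1-α) = C ^ (1-α) := by
    rw [← Real.mul_rpow (by positivity) hT.le, div_mul_cancel₀ _ hT.ne']
  calc A ^ α * C ^ (1 - α) = ((A/S) ^ α * S ^ α) * ((C/T) ^ (1-α) * T ^ (1-α)) := by
        rw [h1, h2]
    _ = ((A/S) ^ α * (C/T) ^ (1-α)) * (S ^ α * T ^ (1-α)) := by ring

/-- 2×2 Hölder inequality -/
lemma holder2_le {A B C D α : ℝ} (hA : 0 < A) (hB : 0 < B) (hC : 0 < C) (hD : 0 < D)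
    (hα : 0 < α) (hα1 : α < 1) :
    A ^ α * C ^ (1-α) + B ^ α * D ^ (1-α) ≤ (A+B) ^ α * (C+D) ^ (1-α) := by
  have hS : (0:ℝ) < A + B := by linarith
  have hT : (0:ℝ) < C + D := by linarith
  have g1 : (A/(A+B)) ^ α * (C/(C+D)) ^ (1-α) ≤ α * (A/(A+B)) + (1-α) * (C/(C+D)) :=
    Real.geom_mean_le_arith_mean2_weighted hα.le (by linarith) (by positivity) (by positivity)
      (by ring)
  have g2 : (B/(A+B)) ^ α * (D/(C+D)) ^ (1-α) ≤ α * (B/(A+B)) + (1-α) * (D/(C+D)) :=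
    Real.geom_mean_le_arith_mean2_weighted hα.le (by linarith) (by positivity) (by positivity)
      (by ring)
  have hsum : α * (A/(A+B)) + (1-α) * (C/(C+D)) + (α * (B/(A+B)) + (1-α) * (D/(C+D))) = 1 := by
    field_simp
    ring
  have hST : 0 < (A+B) ^ α * (C+D) ^ (1-α) := by positivity
  rw [rpow_decomp hA hC hS hT, rpow_decomp hB hD hS hT]
  calc _ ≤ (α * (A/(A+B)) + (1-α) * (C/(C+D))) * ((A+B) ^ α * (C+D) ^ (1-α))
        + (α * (B/(A+B)) + (1-α) * (D/(C+D))) * ((A+B) ^ α * (C+D) ^ (1-α)) := by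
        gcongr
    _ = (A+B) ^ α * (C+D) ^ (1-α) := by rw [← add_mul, hsum, one_mul]

/-- strict 2×2 Hölder when not proportional -/
lemma holder2_lt {A B C D α : ℝ} (hA : 0 < A) (hB : 0 < B) (hC : 0 < C) (hD : 0 < D)
    (hα : 0 < α) (hα1 : α < 1) (hne : A * D ≠ B * C) :
    A ^ α * C ^ (1-α) + B ^ α * D ^ (1-α) < (A+B) ^ α * (C+D) ^ (1-α) := by
  have hS : (0:ℝ) < A + B := by linarith
  have hT : (0:ℝ) < C + D := by linarith
  have hprop : A/(A+B) ≠ C/(C+D) := by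
    intro h
    apply hne
    field_simp at h
    nlinarith [h]
  have g1 : (A/(A+B)) ^ α * (C/(C+D)) ^ (1-α) < α * (A/(A+B)) + (1-α) * (C/(C+D)) :=
    young_strict (by positivity) (by positivity) hα hα1 hprop
  have g2 : (B/(A+B)) ^ α * (D/(C+D)) ^ (1-α) ≤ α * (B/(A+B)) + (1-α) * (D/(C+D)) :=
    Real.geom_mean_le_arith_mean2_weighted hα.le (by linarith) (by positivity) (by positivity)
      (by ring)
  have hsum : α * (A/(A+B)) + (1-α) * (C/(C+D)) + (α * (B/(A+B)) + (1-α) * (D/(C+D))) = 1 := by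
    field_simp
    ring
  have hST : 0 < (A+B) ^ α * (C+D) ^ (1-α) := by positivity
  rw [rpow_decomp hA hC hS hT, rpow_decomp hB hD hS hT]
  calc _ < (α * (A/(A+B)) + (1-α) * (C/(C+D))) * ((A+B) ^ α * (C+D) ^ (1-α))
        + (α * (B/(A+B)) + (1-α) * (D/(C+D))) * ((A+B) ^ α * (C+D) ^ (1-α)) := by
        have hg2pos : (0:ℝ) < (B/(A+B)) ^ α * (D/(C+D)) ^ (1-α) := by positivity
        have := mul_lt_mul_of_pos_right g1 hST
        have := mul_le_mul_of_nonneg_right g2 hST.le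
        linarith
    _ = (A+B) ^ α * (C+D) ^ (1-α) := by rw [← add_mul, hsum, one_mul]


/-- to the right of any point, a min of finitely many affine functions agrees with one of them -/
lemma affine_min_right {n : ℕ} (p q : Fin (n+1) → ℝ) (c : ℝ) :
    ∃ k : Fin (n+1), ∃ ε : ℝ, 0 < ε ∧ ∀ t ∈ Set.Icc c (c+ε),
      (Finset.univ.inf' Finset.univ_nonempty fun j => p j + t * q j) = p k + t * q k := by
  set Q : ℝ → ℝ := fun t => Finset.univ.inf' Finset.univ_nonempty fun j => p j + t * q j with hQdef
  have hQle : ∀ t j, Q t ≤ p j + t * q j := fun t j =>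
    Finset.inf'_le _ (Finset.mem_univ j)
  -- the active set at c
  set S : Finset (Fin (n+1)) := Finset.univ.filter (fun j => p j + c * q j = Q c) with hSdef
  have hSne : S.Nonempty := by
    obtain ⟨k, -, hk⟩ := Finset.exists_mem_eq_inf' (Finset.univ_nonempty) (fun j => p j + c * q j)
    exact ⟨k, by simp [hSdef, hk.symm, hQdef]⟩
  obtain ⟨k, hkS, hkmin⟩ := Finset.exists_min_image S q hSne
  have hkact : p k + c * q k = Q c := (Finset.mem_filter.1 hkS).2
  -- choose ε
  set ε : ℝ := Finset.univ.inf' Finset.univ_nonempty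
    (fun j => if p j + c * q j = Q c then 1 else (p j + c * q j - Q c) / (|q j - q k| + 1)) with hεdef
  have hεpos : 0 < ε := by
    rw [hεdef, Finset.lt_inf'_iff]
    intro j _
    by_cases hj : p j + c * q j = Q c
    · simp [hj]
    · have h1 : Q c ≤ p j + c * q j := hQle c j
      have h2 : 0 < p j + c * q j - Q c := by
        rcases lt_or_eq_of_le h1 with h | h
        · linarith
        · exact absurd h.symm hj
      have h3 : (0:ℝ) < |q j - q k| + 1 := by positivity
      simp only [hj, if_false]
      positivity
  refine ⟨k, ε, hεpos, fun t ht => ?_⟩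
  obtain ⟨htc, htε⟩ := ht
  refine le_antisymm (hQle t k) (Finset.le_inf' _ _ fun j _ => ?_)
  by_cases hj : p j + c * q j = Q c
  · -- active: slopes comparison
    have hqk : q k ≤ q j := hkmin j (by simp [hSdef, hj])
    nlinarith [hkact, hj]
  · -- inactive: use ε bound
    have hδ : 0 < p j + c * q j - Q c := by
      rcases lt_or_eq_of_le (hQle c j) with h | h
      · linarith
      · exact absurd h.symm hj
    have hεle : ε ≤ (p j + c * q j - Q c) / (|q j - q k| + 1) := by
      have := Finset.inf'_le (b := j)
        (f := fun j => if p j + c * q j = Q c then 1 else (p j + c * q j - Q c) / (|q j - q k| + 1))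
        (Finset.mem_univ j)
      simp only [hj, ↓reduceIte] at this
      exact this
    set δ := p j + c * q j - Q c with hδdef
    set M := |q j - q k| with hMdef
    have hM0 : 0 ≤ M := abs_nonneg _
    have habs : (t - c) * (q j - q k) ≥ -(ε * M) := by
      have h1 : |(t - c) * (q j - q k)| ≤ ε * M := by
        rw [abs_mul]
        have h2 : |t - c| ≤ ε := by
          rw [abs_of_nonneg (by linarith)]
          linarith
        exact mul_le_mul h2 le_rfl hM0 hεpos.le
      linarith [neg_abs_le ((t - c) * (q j - q k))]
    have hM1 : (0:ℝ) < M + 1 := by linarith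
    have key : ε * (M + 1) ≤ δ := by
      rw [le_div_iff₀ hM1] at hεle
      linarith
    nlinarith [hkact, habs, key, hεpos]

lemma affine_min_left {n : ℕ} (p q : Fin (n+1) → ℝ) (c : ℝ) :
    ∃ k : Fin (n+1), ∃ ε : ℝ, 0 < ε ∧ ∀ t ∈ Set.Icc (c-ε) c,
      (Finset.univ.inf' Finset.univ_nonempty fun j => p j + t * q j) = p k + t * q k := by
  obtain ⟨k, ε, hε, h⟩ := affine_min_right (fun j => p j + 2*c*q j) (fun j => -q j) c
  refine ⟨k, ε, hε, fun t ht => ?_⟩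
  have hs : 2*c - t ∈ Set.Icc c (c+ε) := ⟨by linarith [ht.2], by linarith [ht.1]⟩
  have := h (2*c - t) hs
  have hcongr : ∀ j : Fin (n+1), (fun j => p j + 2*c*q j + (2*c-t) * (-q j)) j
      = (fun j => p j + t * q j) j := fun j => by ring
  rw [Finset.inf'_congr Finset.univ_nonempty rfl (fun j _ => hcongr j)] at this
  rw [this]; ring

/-- if a minimum `g` of finitely many log-affine functions (with strictly
positive coefficient vectors) is a convex combination `g = α ψ + (1-α) φ` of exponentially
concave functions on the simplex, then `ψ` and `φ` differ from `g` by additive constants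
`c₁, c₂` with `α c₁ + (1-α) c₂ = 0`.  In particular `g` is an extreme point of the set of
exponentially concave functions modulo additive constants. -/
theorem statement8 {d : ℕ} (hd : 2 ≤ d) (n : ℕ)
    (w : Fin (n + 1) → Fin d → ℝ) (hw : ∀ k i, 0 < w k i)
    (α : ℝ) (hα : α ∈ Set.Ioo (0:ℝ) 1)
    (ψ φ : (Fin d → ℝ) → ℝ) (hψ : ExpConcave ψ) (hφ : ExpConcave φ)
    (heq : ∀ x ∈ openSimplex d, minLogAffine w x = α * ψ x + (1 - α) * φ x) :
    ∃ c₁ c₂ : ℝ, α * c₁ + (1 - α) * c₂ = 0 ∧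
      ∀ x ∈ openSimplex d, ψ x = minLogAffine w x + c₁ ∧ φ x = minLogAffine w x + c₂ := by
  obtain ⟨hα0, hα1⟩ := hα
  have h1α : (0:ℝ) < 1 - α := by linarith
  have hdpos : 0 < d := by omega
  haveI : Nonempty (Fin d) := ⟨⟨0, hdpos⟩⟩
  have hdot : ∀ (k : Fin (n+1)) (x : Fin d → ℝ), x ∈ openSimplex d → 0 < ∑ i, w k i * x i :=
    fun k x hx => Finset.sum_pos (fun i _ => mul_pos (hw k i) (hx.1 i)) Finset.univ_nonempty
  have hm : ∀ x ∈ openSimplex d, Real.exp (minLogAffine w x)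
      = Finset.univ.inf' Finset.univ_nonempty (fun k => ∑ i, w k i * x i) := by
    intro x hx
    obtain ⟨k, -, hk⟩ := Finset.exists_mem_eq_inf' (Finset.univ_nonempty)
      (fun k : Fin (n+1) => Real.log (∑ i, w k i * x i))
    have hkmin : ∀ j : Fin (n+1), (∑ i, w k i * x i) ≤ ∑ i, w j i * x i := by
      intro j
      have h1 : Real.log (∑ i, w k i * x i) ≤ Real.log (∑ i, w j i * x i) :=
        hk ▸ Finset.inf'_le _ (Finset.mem_univ j)
      exact (Real.log_le_log_iff (hdot k x hx) (hdot j x hx)).1 h1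
    have hinf : Finset.univ.inf' Finset.univ_nonempty (fun k => ∑ i, w k i * x i)
        = ∑ i, w k i * x i :=
      le_antisymm (Finset.inf'_le _ (Finset.mem_univ k)) (Finset.le_inf' _ _ fun j _ => hkmin j)
    rw [minLogAffine, hk, Real.exp_log (hdot k x hx), hinf]
  have hprod : ∀ x ∈ openSimplex d, Real.exp (ψ x) ^ α * Real.exp (φ x) ^ (1-α)
      = Finset.univ.inf' Finset.univ_nonempty (fun k => ∑ i, w k i * x i) := by
    intro x hx
    rw [← hm x hx, heq x hx, Real.exp_add, mul_comm α, mul_comm (1-α), Real.exp_mul, Real.exp_mul]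
  -- the key ratio claim
  have hratio : ∀ x ∈ openSimplex d, ∀ y ∈ openSimplex d,
      Real.exp (ψ x) * Real.exp (φ y) = Real.exp (ψ y) * Real.exp (φ x) := by
    intro x hx y hy
    set z : ℝ → (Fin d → ℝ) := fun t i => (1-t) * x i + t * y i with hzdef
    have hz : ∀ t ∈ Set.Icc (0:ℝ) 1, z t ∈ openSimplex d := by
      intro t ht
      refine ⟨fun i => ?_, ?_⟩
      · rcases eq_or_lt_of_le ht.1 with h | h
        · simp only [hzdef, ← h]
          simpa using hx.1 i
        · have h1 : 0 < t * y i := mul_pos h (hy.1 i)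
          have h2 : 0 ≤ (1-t) * x i := mul_nonneg (by linarith [ht.2]) (hx.1 i).le
          simp only [hzdef]; linarith
      · have : ∀ i, (1-t) * x i + t * y i = (1-t) * x i + t * y i := fun _ => rfl
        simp only [hzdef]
        rw [Finset.sum_add_distrib, ← Finset.mul_sum, ← Finset.mul_sum, hx.2, hy.2]
        ring
    set p : Fin (n+1) → ℝ := fun k => ∑ i, w k i * x i with hpdef
    set q : Fin (n+1) → ℝ := fun k => (∑ i, w k i * y i) - p k with hqdef
    have hdotz : ∀ (k : Fin (n+1)) (t : ℝ), (∑ i, w k i * z t i) = p k + t * q k := by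
      intro k t
      have h1 : ∀ i, w k i * z t i = (1-t)*(w k i * x i) + t*(w k i * y i) := by
        intro i; simp only [hzdef]; ring
      rw [Finset.sum_congr rfl fun i _ => h1 i, Finset.sum_add_distrib,
        ← Finset.mul_sum, ← Finset.mul_sum]
      simp only [hpdef, hqdef]
      ring
    set Q : ℝ → ℝ := fun t => Finset.univ.inf' Finset.univ_nonempty (fun k => p k + t * q k)
      with hQdef
    have hQz : ∀ t ∈ Set.Icc (0:ℝ) 1,
        Real.exp (ψ (z t)) ^ α * Real.exp (φ (z t)) ^ (1-α) = Q t := by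
      intro t ht
      rw [hprod (z t) (hz t ht), hQdef]
      exact Finset.inf'_congr Finset.univ_nonempty rfl (fun k _ => hdotz k t)
    set P : ℝ → ℝ → Prop := fun s t =>
      Real.exp (ψ (z s)) * Real.exp (φ (z t)) = Real.exp (ψ (z t)) * Real.exp (φ (z s))
      with hPdef
    clear_value z p q Q P
    have key : ∀ s ∈ Set.Icc (0:ℝ) 1, ∀ t ∈ Set.Icc (0:ℝ) 1,
        (∃ k : Fin (n+1), Q s = p k + s * q k ∧ Q t = p k + t * q k) → P s t := by
      rintro s hs t ht ⟨k, hks, hkt⟩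
      set A := Real.exp (ψ (z s)) with hAdef
      set B := Real.exp (ψ (z t)) with hBdef
      set C := Real.exp (φ (z s)) with hCdef
      set D := Real.exp (φ (z t)) with hDdef
      have hA : 0 < A := Real.exp_pos _
      have hB : 0 < B := Real.exp_pos _
      have hC : 0 < C := Real.exp_pos _
      have hD : 0 < D := Real.exp_pos _
      clear_value A B C D
      obtain ⟨mid, hmiddef⟩ : ∃ m : ℝ, m = (s + t) / 2 := ⟨_, rfl⟩
      have hmidmem : mid ∈ Set.Icc (0:ℝ) 1 := by
        rw [hmiddef, Set.mem_Icc]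
        constructor <;> [linarith [hs.1, ht.1]; linarith [hs.2, ht.2]]
      have hQmid_ge : (Q s + Q t)/2 ≤ Q mid := by
        have e : Q mid = Finset.univ.inf' Finset.univ_nonempty (fun j => p j + mid * q j) := by
          rw [hQdef]
        rw [e]
        apply Finset.le_inf'
        intro j _
        have h1 : Q s ≤ p j + s * q j := by
          rw [hQdef]; exact Finset.inf'_le _ (Finset.mem_univ j)
        have h2 : Q t ≤ p j + t * q j := by
          rw [hQdef]; exact Finset.inf'_le _ (Finset.mem_univ j)
        have h3 : p j + mid * q j = ((p j + s * q j) + (p j + t * q j))/2 := by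
          rw [hmiddef]; ring
        linarith
      have hQmid_le : Q mid ≤ (Q s + Q t)/2 := by
        have h1 : Q mid ≤ p k + mid * q k := by
          rw [hQdef]; exact Finset.inf'_le _ (Finset.mem_univ k)
        have h2 : p k + mid * q k = (Q s + Q t)/2 := by rw [hmiddef, hks, hkt]; ring
        linarith
      have hQmid : Q mid = (Q s + Q t)/2 := le_antisymm hQmid_le hQmid_ge
      have hzmid : z mid = (1/2 : ℝ) • (z s) + (1/2 : ℝ) • (z t) := by
        funext i
        simp only [hzdef, Pi.add_apply, Pi.smul_apply, smul_eq_mul, hmiddef]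
        ring
      have hFm : (A + B)/2 ≤ Real.exp (ψ (z mid)) := by
        have h := hψ.2 (hz s hs) (hz t ht) (by norm_num : (0:ℝ) ≤ 1/2)
          (by norm_num : (0:ℝ) ≤ 1/2) (by norm_num)
        rw [← hzmid] at h
        simp only [smul_eq_mul] at h
        rw [hAdef, hBdef]; linarith
      have hGm : (C + D)/2 ≤ Real.exp (φ (z mid)) := by
        have h := hφ.2 (hz s hs) (hz t ht) (by norm_num : (0:ℝ) ≤ 1/2)
          (by norm_num : (0:ℝ) ≤ 1/2) (by norm_num)
        rw [← hzmid] at h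
        simp only [smul_eq_mul] at h
        rw [hCdef, hDdef]; linarith
      have hstep1 : ((A+B)/2) ^ α * ((C+D)/2) ^ (1-α) ≤ Q mid := by
        rw [← hQz mid hmidmem]
        exact mul_le_mul (Real.rpow_le_rpow (by linarith) hFm hα0.le)
          (Real.rpow_le_rpow (by linarith) hGm h1α.le)
          (Real.rpow_nonneg (by linarith) _) (by positivity)
      have e1 : (A/2)^α*(C/2)^(1-α) = (A^α*C^(1-α))/2 := by
        rw [Real.div_rpow hA.le (by norm_num), Real.div_rpow hC.le (by norm_num),
          div_mul_div_comm, ← Real.rpow_add (by norm_num : (0:ℝ) < 2)]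
        norm_num
      have e2 : (B/2)^α*(D/2)^(1-α) = (B^α*D^(1-α))/2 := by
        rw [Real.div_rpow hB.le (by norm_num), Real.div_rpow hD.le (by norm_num),
          div_mul_div_comm, ← Real.rpow_add (by norm_num : (0:ℝ) < 2)]
        norm_num
      have hchain : A^α * C^(1-α) = Q s := by
        have := hQz s hs; rw [← hAdef, ← hCdef] at this; exact this
      have hchain' : B^α * D^(1-α) = Q t := by
        have := hQz t ht; rw [← hBdef, ← hDdef] at this; exact this
      have hHle := holder2_le (half_pos hA) (half_pos hB) (half_pos hC) (half_pos hD) hα0 hα1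
      have hsum2 : A/2 + B/2 = (A+B)/2 := by ring
      have hsum2' : C/2 + D/2 = (C+D)/2 := by ring
      have hHeq : (A/2)^α*(C/2)^(1-α) + (B/2)^α*(D/2)^(1-α)
          = (A/2+B/2)^α*(C/2+D/2)^(1-α) := by
        refine le_antisymm hHle ?_
        rw [hsum2, hsum2', e1, e2, hchain, hchain']
        linarith
      simp only [hPdef, ← hAdef, ← hBdef, ← hCdef, ← hDdef]
      by_contra hne'
      have hne2 : A/2 * (D/2) ≠ B/2 * (C/2) := by
        intro h
        apply hne'
        have : A * D = B * C := by linarith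
        linarith [this]
      exact absurd hHeq (holder2_lt (half_pos hA) (half_pos hB) (half_pos hC) (half_pos hD)
        hα0 hα1 hne2).ne
    have htrans : ∀ u v t : ℝ, P u v → P v t → P u t := by
      intro u v t h1 h2
      have hF : (0:ℝ) < Real.exp (ψ (z v)) := Real.exp_pos _
      have hG : (0:ℝ) < Real.exp (φ (z v)) := Real.exp_pos _
      simp only [hPdef] at h1 h2 ⊢
      apply mul_left_cancel₀ (mul_pos hF hG).ne'
      linear_combination (Real.exp (φ (z t)) * Real.exp (ψ (z v))) * h1
        + (Real.exp (φ (z u)) * Real.exp (ψ (z v))) * h2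
    set T : Set ℝ := {t | t ∈ Set.Icc (0:ℝ) 1 ∧ ∀ s ∈ Set.Icc 0 t, P 0 s} with hTdef
    have h0T : (0:ℝ) ∈ T := by
      refine ⟨⟨le_refl 0, by norm_num⟩, fun s hs => ?_⟩
      have hs0 : s = 0 := le_antisymm hs.2 hs.1
      rw [hs0]; simp only [hPdef]
    have hTbdd : BddAbove T := ⟨1, fun t ht => ht.1.2⟩
    set c := sSup T with hcdef
    have hc0 : 0 ≤ c := le_csSup hTbdd h0T
    have hc1 : c ≤ 1 := csSup_le ⟨0, h0T⟩ (fun t ht => ht.1.2)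
    have hcmem : c ∈ Set.Icc (0:ℝ) 1 := ⟨hc0, hc1⟩
    have hbelow : ∀ s, 0 ≤ s → s < c → P 0 s := by
      intro s hs0 hsc
      obtain ⟨t, htT, hst⟩ := exists_lt_of_lt_csSup ⟨0, h0T⟩ hsc
      exact htT.2 s ⟨hs0, hst.le⟩
    have hP0c : P 0 c := by
      rcases eq_or_lt_of_le hc0 with h | h
      · rw [← h]; simp only [hPdef]
      · obtain ⟨k, ε, hε, hleft⟩ := affine_min_left p q c
        set s := max (c - ε) (c/2) with hsdef
        have hs0 : 0 ≤ s := le_trans (by linarith) (le_max_right _ _)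
        have hsc : s < c := max_lt (by linarith) (by linarith)
        have hsIcc : s ∈ Set.Icc (0:ℝ) 1 := ⟨hs0, by linarith⟩
        have hsQ : Q s = p k + s * q k := by
          rw [hQdef]; exact hleft s ⟨le_max_left _ _, hsc.le⟩
        have hcQ : Q c = p k + c * q k := by
          rw [hQdef]; exact hleft c ⟨by linarith, le_refl c⟩
        exact htrans 0 s c (hbelow s hs0 hsc) (key s hsIcc c hcmem ⟨k, hsQ, hcQ⟩)
    have hceq : c = 1 := by
      by_contra hne
      have hclt : c < 1 := lt_of_le_of_ne hc1 hne
      obtain ⟨k, ε, hε, hright⟩ := affine_min_right p q c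
      set ε' := min ε (1 - c) with hε'def
      have hε'pos : 0 < ε' := lt_min hε (by linarith)
      have hε'le : ε' ≤ ε := min_le_left _ _
      have hε'le' : ε' ≤ 1 - c := min_le_right _ _
      have hmemT : c + ε' ∈ T := by
        refine ⟨⟨by linarith, by linarith⟩, fun s hs => ?_⟩
        rcases lt_or_ge s c with h | h
        · exact hbelow s hs.1 h
        · have hsQ : Q s = p k + s * q k := by
            rw [hQdef]; exact hright s ⟨h, by linarith [hs.2]⟩
          have hcQ : Q c = p k + c * q k := by
            rw [hQdef]; exact hright c ⟨le_refl c, by linarith⟩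
          have hsIcc : s ∈ Set.Icc (0:ℝ) 1 := ⟨hs.1, by linarith [hs.2]⟩
          exact htrans 0 c s hP0c (key c hcmem s hsIcc ⟨k, hcQ, hsQ⟩)
      have := le_csSup hTbdd hmemT
      rw [← hcdef] at this
      linarith
    have hP01 : P 0 1 := hceq ▸ hP0c
    have hz0 : z 0 = x := by funext i; simp [hzdef]
    have hz1 : z 1 = y := by funext i; simp [hzdef]
    simpa only [hPdef, hz0, hz1] using hP01
  -- assemble the conclusion
  have hx0mem : (fun _ : Fin d => (d:ℝ)⁻¹) ∈ openSimplex d := by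
    refine ⟨fun i => inv_pos.2 (Nat.cast_pos.2 hdpos), ?_⟩
    rw [Finset.sum_const, Finset.card_univ, Fintype.card_fin, nsmul_eq_mul]
    exact mul_inv_cancel₀ (Nat.cast_ne_zero.2 hdpos.ne')
  set x₀ : Fin d → ℝ := fun _ => (d:ℝ)⁻¹ with hx₀def
  set s := ψ x₀ - φ x₀ with hsdef
  clear_value x₀ s
  refine ⟨(1-α)*s, -(α*s), by ring, fun x hx => ?_⟩
  have hr := hratio x hx x₀ hx0mem
  rw [← Real.exp_add, ← Real.exp_add] at hr
  have heqlog : ψ x + φ x₀ = ψ x₀ + φ x := Real.exp_eq_exp.1 hr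
  have hψx : ψ x = φ x + s := by rw [hsdef]; linarith
  have hg := heq x hx
  constructor
  · rw [hg, hψx]; ring
  · rw [hg, hψx]; ring
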